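/- For any miner j ≠ i with Δ < x_j*, the individual griefing factor of the deviation x_i* + Δ against j exceeds 1: the utility loss of miner j caused by miner i's deviation from Nash equilibrium to x_i* + Δ is strictly larger than miner i's own utility loss. -/

import Mathlib

open Finset

/-- Payoff of miner `i` in the mining game with costs `c` and allocations `x`. -/
noncomputable def payoff {n : ℕ} (c x : Fin n → ℝ) (i : Fin n) : ℝ :=
  x i / (∑ k, x k) - c i * x i

/-- for any miner `j ≠ i` with `Δ < x_j*`, miner `j`'s loss caused by
miner `i`'s deviation to `x_i* + Δ` strictly exceeds miner `i`'s own loss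
(individual griefing factor exceeds 1). -/
theorem individual_griefing_factor_exceeds_one (n : ℕ) (hn : 2 ≤ n)
    (c : Fin n → ℝ) (hc : ∀ i, 0 < c i)
    (cstar : ℝ) (hcstar : cstar = (∑ k, c k) / ((n : ℝ) - 1))
    (hpart : ∀ i, c i < cstar)
    (xstar : Fin n → ℝ) (hx : ∀ i, xstar i = (1 - c i / cstar) / cstar)
    (i j : Fin n) (hij : j ≠ i) (Δ : ℝ) (hΔ : 0 < Δ) (hΔj : Δ < xstar j) :
    payoff c xstar i - payoff c (Function.update xstar i (xstar i + Δ)) i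
      < payoff c xstar j - payoff c (Function.update xstar i (xstar i + Δ)) j := by
  have hn1 : (1:ℝ) < (n:ℝ) := by exact_mod_cast Nat.lt_of_lt_of_le one_lt_two hn
  have hn1' : (0:ℝ) < (n:ℝ) - 1 := by linarith
  have hcsum : 0 < ∑ k, c k := Finset.sum_pos (fun k _ => hc k) ⟨i, mem_univ i⟩
  have hs : 0 < cstar := hcstar ▸ div_pos hcsum hn1'
  have hsne : cstar ≠ 0 := ne_of_gt hs
  have hcsum' : ∑ k, c k = cstar * ((n:ℝ) - 1) := by
    rw [hcstar]; field_simp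
  have hsum : ∑ k, xstar k = 1 / cstar := by
    have h1 : ∑ k, xstar k = ((n:ℝ) - (∑ k, c k) / cstar) / cstar := by
      simp only [hx]
      rw [← Finset.sum_div, Finset.sum_sub_distrib, Finset.sum_const, card_univ,
        Fintype.card_fin, ← Finset.sum_div]
      simp [nsmul_eq_mul]
    rw [h1, hcsum']
    field_simp
    ring
  have hupd : ∑ k, Function.update xstar i (xstar i + Δ) k = 1 / cstar + Δ := by
    rw [Finset.sum_update_of_mem (mem_univ i), Finset.sdiff_singleton_eq_erase,
      Finset.sum_erase_eq_sub (mem_univ i), hsum]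
    ring
  have hD : 0 < 1 / cstar + Δ := by positivity
  have hΔj' : Δ * cstar < 1 - c j / cstar := by
    rw [hx j] at hΔj
    rwa [lt_div_iff₀ hs] at hΔj
  have hcj : c j / cstar * cstar = c j := div_mul_cancel₀ _ hsne
  have key : Δ * cstar ^ 2 < cstar - c j := by nlinarith [mul_lt_mul_of_pos_right hΔj' hs]
  simp only [payoff, hupd, hsum, Function.update_self, Function.update_of_ne hij]
  rw [hx i, hx j]
  have hDne : 1 / cstar + Δ ≠ 0 := ne_of_gt hD
  have lhs_eq : (1 - c i / cstar) / cstar / (1 / cstar) - c i * ((1 - c i / cstar) / cstar) -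
      (((1 - c i / cstar) / cstar + Δ) / (1 / cstar + Δ) - c i * ((1 - c i / cstar) / cstar + Δ))
      = Δ ^ 2 * c i * cstar / (1 + cstar * Δ) := by
    field_simp
    ring
  have rhs_eq : (1 - c j / cstar) / cstar / (1 / cstar) - c j * ((1 - c j / cstar) / cstar) -
      ((1 - c j / cstar) / cstar / (1 / cstar + Δ) - c j * ((1 - c j / cstar) / cstar))
      = Δ * (cstar - c j) / (1 + cstar * Δ) := by
    field_simp
    ring
  rw [lhs_eq, rhs_eq]
  have hden : 0 < 1 + cstar * Δ := by positivity
  rw [div_lt_div_iff₀ hden hden]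
  nlinarith [mul_lt_mul_of_pos_left key hΔ, hpart i, hc i,
    mul_lt_mul_of_pos_right (hpart i) (mul_pos (mul_pos hΔ hΔ) hs), hden]
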